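/- Consider the single-sensor least-squares registration problem. For a fixed azimuth bias Δφ ∈ ℝ, define for k = 1,…,K−1: c_k(Δφ) = λ⁻¹(cos(φ_{k+1}+Δφ) − cos(φ_k+Δφ)), s_k(Δφ) = λ⁻¹(sin(φ_{k+1}+Δφ) − sin(φ_k+Δφ)), y_k^c(Δφ) = −λ⁻¹(ρ_{k+1}·cos(φ_{k+1}+Δφ) − ρ_k·cos(φ_k+Δφ)), y_k^s(Δφ) = −λ⁻¹(ρ_{k+1}·sin(φ_{k+1}+Δφ) − ρ_k·sin(φ_k+Δφ)). Let H₀(Δφ) ∈ ℝ^{2(K−1)} be the vector (c₁, s₁, c₂, s₂, …, c_{K−1}, s_{K−1}), let H₁ ∈ ℝ^{2(K−1)×2} be the matrix whose (2k−1)-th row is (−T_k, 0) and whose 2k-th row is (0, −T_k), let y(Δφ) ∈ ℝ^{2(K−1)} be the vector (y₁^c, y₁^s, …, y_{K−1}^c, y_{K−1}^s), and let H(Δφ) = [H₀(Δφ), H₁] ∈ ℝ^{2(K−1)×3}. Assume that H(Δφ) has rank 3 for every Δφ ∈ ℝ. Then for all Δφ, Δφ' ∈ ℝ: (i) the first component of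 (H(Δφ)ᵀH(Δφ))⁻¹H(Δφ)ᵀy(Δφ) equals the first component of (H(Δφ')ᵀH(Δφ'))⁻¹H(Δφ')ᵀy(Δφ') (the optimal range bias is independent of Δφ), and (ii) ‖H(Δφ)·(H(Δφ)ᵀH(Δφ))⁻¹H(Δφ)ᵀy(Δφ) − y(Δφ)‖ = ‖H(Δφ')·(H(Δφ')ᵀH(Δφ'))⁻¹H(Δφ')ᵀy(Δφ') − y(Δφ')‖ (the optimal least-squares objective value is independent of Δφ). -/

import Mathlib

open Matrix

/-- The index `k` (first of a consecutive pair) as an element of `Fin K`. -/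
def loIdx {K : ℕ} (k : Fin (K - 1)) : Fin K := ⟨k.1, by have h := k.2; omega⟩

/-- The index `k+1` (second of a consecutive pair) as an element of `Fin K`. -/
def hiIdx {K : ℕ} (k : Fin (K - 1)) : Fin K := ⟨k.1 + 1, by have h := k.2; omega⟩

/-- `c_k(Δφ) = λ⁻¹ (cos(φ_{k+1}+Δφ) − cos(φ_k+Δφ))`. -/
noncomputable def ck {K : ℕ} (φ : Fin K → ℝ) (lam : ℝ) (Δφ : ℝ) (k : Fin (K - 1)) : ℝ :=
  lam⁻¹ * (Real.cos (φ (hiIdx k) + Δφ) - Real.cos (φ (loIdx k) + Δφ))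

/-- `s_k(Δφ) = λ⁻¹ (sin(φ_{k+1}+Δφ) − sin(φ_k+Δφ))`. -/
noncomputable def sk {K : ℕ} (φ : Fin K → ℝ) (lam : ℝ) (Δφ : ℝ) (k : Fin (K - 1)) : ℝ :=
  lam⁻¹ * (Real.sin (φ (hiIdx k) + Δφ) - Real.sin (φ (loIdx k) + Δφ))

/-- `y_k^c(Δφ) = −λ⁻¹ (ρ_{k+1} cos(φ_{k+1}+Δφ) − ρ_k cos(φ_k+Δφ))`. -/
noncomputable def yck {K : ℕ} (ρ φ : Fin K → ℝ) (lam : ℝ) (Δφ : ℝ) (k : Fin (K - 1)) : ℝ :=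
  -(lam⁻¹ * (ρ (hiIdx k) * Real.cos (φ (hiIdx k) + Δφ) - ρ (loIdx k) * Real.cos (φ (loIdx k) + Δφ)))

/-- `y_k^s(Δφ) = −λ⁻¹ (ρ_{k+1} sin(φ_{k+1}+Δφ) − ρ_k sin(φ_k+Δφ))`. -/
noncomputable def ysk {K : ℕ} (ρ φ : Fin K → ℝ) (lam : ℝ) (Δφ : ℝ) (k : Fin (K - 1)) : ℝ :=
  -(lam⁻¹ * (ρ (hiIdx k) * Real.sin (φ (hiIdx k) + Δφ) - ρ (loIdx k) * Real.sin (φ (loIdx k) + Δφ)))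

/-- The matrix `H(Δφ) = [H₀(Δφ), H₁] ∈ ℝ^{2(K−1)×3}`; rows are indexed by pairs `(k, i)` with
`i = 0` for the “cosine” row `(c_k, −T_k, 0)` and `i = 1` for the “sine” row `(s_k, 0, −T_k)`. -/
noncomputable def Hmat {K : ℕ} (φ : Fin K → ℝ) (T : Fin (K - 1) → ℝ) (lam : ℝ) (Δφ : ℝ) :
    Matrix (Fin (K - 1) × Fin 2) (Fin 3) ℝ :=
  Matrix.of fun p j =>
    if p.2 = 0 then
      if j = 0 then ck φ lam Δφ p.1 else if j = 1 then -T p.1 else 0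
    else
      if j = 0 then sk φ lam Δφ p.1 else if j = 2 then -T p.1 else 0

/-- The vector `y(Δφ) = (y₁^c, y₁^s, …, y_{K−1}^c, y_{K−1}^s) ∈ ℝ^{2(K−1)}`. -/
noncomputable def yvec {K : ℕ} (ρ φ : Fin K → ℝ) (lam : ℝ) (Δφ : ℝ) :
    Fin (K - 1) × Fin 2 → ℝ :=
  fun p => if p.2 = 0 then yck ρ φ lam Δφ p.1 else ysk ρ φ lam Δφ p.1

/- ### Auxiliary rotation matrices -/

/-- Column-mixing matrix `S = blockdiag(1, R(δ))`. -/
noncomputable def Smat (δ : ℝ) : Matrix (Fin 3) (Fin 3) ℝ := fun i j =>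
  if i = 0 then (if j = 0 then 1 else 0)
  else if i = 1 then (if j = 1 then Real.cos δ else if j = 2 then -Real.sin δ else 0)
  else (if j = 1 then Real.sin δ else if j = 2 then Real.cos δ else 0)

/-- Inverse of `Smat`. -/
noncomputable def SmatInv (δ : ℝ) : Matrix (Fin 3) (Fin 3) ℝ := fun i j =>
  if i = 0 then (if j = 0 then 1 else 0)
  else if i = 1 then (if j = 1 then Real.cos δ else if j = 2 then Real.sin δ else 0)
  else (if j = 1 then -Real.sin δ else if j = 2 then Real.cos δ else 0)

/-- The planar rotation by `δ`. -/
noncomputable def rot2 (δ : ℝ) : Matrix (Fin 2) (Fin 2) ℝ := fun i j =>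
  if i = 0 then (if j = 0 then Real.cos δ else -Real.sin δ)
  else (if j = 0 then Real.sin δ else Real.cos δ)

/-- The block-diagonal rotation acting on the rows. -/
noncomputable def Qmat {K : ℕ} (δ : ℝ) :
    Matrix (Fin (K - 1) × Fin 2) (Fin (K - 1) × Fin 2) ℝ :=
  fun p q => if p.1 = q.1 then rot2 δ p.2 q.2 else 0

lemma Smat_mul_inv (δ : ℝ) : Smat δ * SmatInv δ = 1 := by
  have h := Real.sin_sq_add_cos_sq δ
  ext i j
  fin_cases i <;> fin_cases j <;>
    simp [Smat, SmatInv, Matrix.mul_apply, Fin.sum_univ_three, Matrix.one_apply] <;>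
    nlinarith

lemma SmatInv_mul (δ : ℝ) : SmatInv δ * Smat δ = 1 := by
  have h := Real.sin_sq_add_cos_sq δ
  ext i j
  fin_cases i <;> fin_cases j <;>
    simp [Smat, SmatInv, Matrix.mul_apply, Fin.sum_univ_three, Matrix.one_apply] <;>
    nlinarith

lemma Qmat_orth {K : ℕ} (δ : ℝ) : (Qmat (K := K) δ)ᵀ * Qmat (K := K) δ = 1 := by
  have h := Real.sin_sq_add_cos_sq δ
  ext ⟨k, i⟩ ⟨k', j⟩
  simp only [Matrix.mul_apply, Matrix.transpose_apply, Qmat, Fintype.sum_prod_type]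
  rw [Finset.sum_eq_single k]
  · by_cases hk : k = k'
    · subst hk
      simp only [if_pos rfl, Matrix.one_apply, Prod.mk.injEq, true_and]
      fin_cases i <;> fin_cases j <;>
        simp [rot2, Fin.sum_univ_two] <;> nlinarith
    · simp [hk, Matrix.one_apply, Prod.ext_iff]
  · intro b _ hb
    simp [hb]
  · simp

lemma Qmat_mul_apply {K : ℕ} (δ : ℝ) (A : Matrix (Fin (K - 1) × Fin 2) (Fin 3) ℝ)
    (p : Fin (K - 1) × Fin 2) (j : Fin 3) :
    (Qmat (K := K) δ * A) p j
      = rot2 δ p.2 0 * A (p.1, 0) j + rot2 δ p.2 1 * A (p.1, 1) j := by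
  simp only [Matrix.mul_apply, Fintype.sum_prod_type, Qmat]
  rw [Finset.sum_eq_single p.1]
  · simp [Fin.sum_univ_two]
  · intro b _ hb; simp [Ne.symm hb]
  · simp

lemma Qmat_mulVec_apply {K : ℕ} (δ : ℝ) (v : Fin (K - 1) × Fin 2 → ℝ)
    (p : Fin (K - 1) × Fin 2) :
    (Qmat (K := K) δ *ᵥ v) p
      = rot2 δ p.2 0 * v (p.1, 0) + rot2 δ p.2 1 * v (p.1, 1) := by
  simp only [Matrix.mulVec, dotProduct, Fintype.sum_prod_type, Qmat]
  rw [Finset.sum_eq_single p.1]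
  · simp [Fin.sum_univ_two]
  · intro b _ hb; simp [Ne.symm hb]
  · simp

lemma Hmat_transform {K : ℕ} (φ : Fin K → ℝ) (T : Fin (K - 1) → ℝ) (lam : ℝ) (Δφ Δφ' : ℝ) :
    Hmat φ T lam Δφ = Qmat (K := K) (Δφ - Δφ') * Hmat φ T lam Δφ' * SmatInv (Δφ - Δφ') := by
  have h := Real.sin_sq_add_cos_sq (Δφ - Δφ')
  have hc : ∀ x : ℝ, Real.cos (x + Δφ)
      = Real.cos (x + Δφ') * Real.cos (Δφ - Δφ') - Real.sin (x + Δφ') * Real.sin (Δφ - Δφ') :=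
    fun x => by rw [show x + Δφ = (x + Δφ') + (Δφ - Δφ') by ring, Real.cos_add]
  have hs : ∀ x : ℝ, Real.sin (x + Δφ)
      = Real.sin (x + Δφ') * Real.cos (Δφ - Δφ') + Real.cos (x + Δφ') * Real.sin (Δφ - Δφ') :=
    fun x => by rw [show x + Δφ = (x + Δφ') + (Δφ - Δφ') by ring, Real.sin_add]
  ext ⟨k, i⟩ j
  rw [Matrix.mul_apply, Fin.sum_univ_three, Qmat_mul_apply, Qmat_mul_apply, Qmat_mul_apply]
  fin_cases i <;> fin_cases j <;>
    simp [Hmat, ck, sk, rot2, SmatInv, hc, hs] <;>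
    first
      | ring1
      | linear_combination (-(T k)) * h
      | linear_combination (T k) * h

lemma yvec_transform {K : ℕ} (ρ φ : Fin K → ℝ) (lam : ℝ) (Δφ Δφ' : ℝ) :
    yvec ρ φ lam Δφ = Qmat (K := K) (Δφ - Δφ') *ᵥ yvec ρ φ lam Δφ' := by
  have hc : ∀ x : ℝ, Real.cos (x + Δφ)
      = Real.cos (x + Δφ') * Real.cos (Δφ - Δφ') - Real.sin (x + Δφ') * Real.sin (Δφ - Δφ') :=
    fun x => by rw [show x + Δφ = (x + Δφ') + (Δφ - Δφ') by ring, Real.cos_add]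
  have hs : ∀ x : ℝ, Real.sin (x + Δφ)
      = Real.sin (x + Δφ') * Real.cos (Δφ - Δφ') + Real.cos (x + Δφ') * Real.sin (Δφ - Δφ') :=
    fun x => by rw [show x + Δφ = (x + Δφ') + (Δφ - Δφ') by ring, Real.sin_add]
  ext ⟨k, i⟩
  rw [Qmat_mulVec_apply]
  fin_cases i <;>
    simp [yvec, yck, ysk, rot2, hc, hs] <;> ring

/-- Theorem 1 (separation property), least-squares form: the optimal range bias
(first component of `(HᵀH)⁻¹Hᵀy`) and the optimal least-squares objective value
are independent of the azimuth bias `Δφ`. -/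
theorem range_bias_and_objective_independent_of_azimuth
    (K : ℕ) (hK : 2 ≤ K) (ρ φ : Fin K → ℝ) (T : Fin (K - 1) → ℝ) (lam : ℝ) (hlam : 0 < lam)
    (hrank : ∀ Δφ : ℝ, (Hmat φ T lam Δφ).rank = 3) (Δφ Δφ' : ℝ) :
    ((((Hmat φ T lam Δφ)ᵀ * Hmat φ T lam Δφ)⁻¹ *ᵥ ((Hmat φ T lam Δφ)ᵀ *ᵥ yvec ρ φ lam Δφ)) 0
      = ((((Hmat φ T lam Δφ')ᵀ * Hmat φ T lam Δφ')⁻¹ *ᵥ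
          ((Hmat φ T lam Δφ')ᵀ *ᵥ yvec ρ φ lam Δφ')) 0)) ∧
    (∑ p, ((Hmat φ T lam Δφ *ᵥ
          ((((Hmat φ T lam Δφ)ᵀ * Hmat φ T lam Δφ)⁻¹ *ᵥ
            ((Hmat φ T lam Δφ)ᵀ *ᵥ yvec ρ φ lam Δφ)))) p - yvec ρ φ lam Δφ p) ^ 2
      = ∑ p, ((Hmat φ T lam Δφ' *ᵥ
          ((((Hmat φ T lam Δφ')ᵀ * Hmat φ T lam Δφ')⁻¹ *ᵥ
            ((Hmat φ T lam Δφ')ᵀ *ᵥ yvec ρ φ lam Δφ')))) p - yvec ρ φ lam Δφ' p) ^ 2) := by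
  set δ := Δφ - Δφ' with hδ
  set A := Hmat φ T lam Δφ' with hA
  set B := Hmat φ T lam Δφ with hBdef
  set Q := Qmat (K := K) δ with hQdef
  set S := Smat δ with hSdef
  set Si := SmatInv δ with hSidef
  set y' := yvec ρ φ lam Δφ' with hy'
  have hB : B = Q * A * Si := Hmat_transform φ T lam Δφ Δφ'
  have hy : yvec ρ φ lam Δφ = Q *ᵥ y' := yvec_transform ρ φ lam Δφ Δφ'
  have hQ : Qᵀ * Q = 1 := Qmat_orth δ
  have hSSi : S * Si = 1 := Smat_mul_inv δ
  have hSiS : Si * S = 1 := SmatInv_mul δ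
  have hSiinv : Si⁻¹ = S := Matrix.inv_eq_right_inv hSiS
  have hSiTinv : (Siᵀ)⁻¹ = Sᵀ := Matrix.inv_eq_right_inv
    (by rw [← Matrix.transpose_mul, hSSi, Matrix.transpose_one])
  have hSTSiT : Sᵀ * Siᵀ = 1 := by rw [← Matrix.transpose_mul, hSiS, Matrix.transpose_one]
  -- Bᵀ * B = Siᵀ * (Aᵀ * A) * Si
  have hBtB : Bᵀ * B = Siᵀ * (Aᵀ * A) * Si := by
    rw [hB]
    simp only [Matrix.transpose_mul, Matrix.mul_assoc]
    rw [← Matrix.mul_assoc Qᵀ Q, hQ, Matrix.one_mul]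
  -- Bᵀ *ᵥ y = (Siᵀ * Aᵀ) *ᵥ y'
  have hBty : Bᵀ *ᵥ yvec ρ φ lam Δφ = (Siᵀ * Aᵀ) *ᵥ y' := by
    rw [hy, hB, Matrix.mulVec_mulVec]
    congr 1
    simp only [Matrix.transpose_mul, Matrix.mul_assoc]
    rw [hQ, Matrix.mul_one]
  -- the normal-equations solution transforms by S
  set x' := (Aᵀ * A)⁻¹ *ᵥ (Aᵀ *ᵥ y') with hx'
  have hx : (Bᵀ * B)⁻¹ *ᵥ (Bᵀ *ᵥ yvec ρ φ lam Δφ) = S *ᵥ x' := by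
    rw [hBtB, hBty, Matrix.mul_inv_rev, Matrix.mul_inv_rev, hSiinv, hSiTinv,
      Matrix.mulVec_mulVec, hx', Matrix.mulVec_mulVec, Matrix.mulVec_mulVec]
    have hmm : S * ((Aᵀ * A)⁻¹ * Sᵀ) * (Siᵀ * Aᵀ) = S * (Aᵀ * A)⁻¹ * Aᵀ := by
      calc S * ((Aᵀ * A)⁻¹ * Sᵀ) * (Siᵀ * Aᵀ)
          = S * ((Aᵀ * A)⁻¹ * (Sᵀ * Siᵀ * Aᵀ)) := by
            simp only [Matrix.mul_assoc]
        _ = S * ((Aᵀ * A)⁻¹ * Aᵀ) := by rw [hSTSiT, Matrix.one_mul]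
        _ = S * (Aᵀ * A)⁻¹ * Aᵀ := by rw [Matrix.mul_assoc]
    rw [hmm]
  constructor
  · rw [hx]
    simp [Matrix.mulVec, dotProduct, Fin.sum_univ_three, hSdef, Smat, hx']
  · rw [hx]
    have hBx : B *ᵥ (S *ᵥ x') = Q *ᵥ (A *ᵥ x') := by
      have hQAS : (Q * A * Si) * S = Q * A := by
        rw [Matrix.mul_assoc, hSiS, Matrix.mul_one]
      rw [hB, Matrix.mulVec_mulVec, hQAS, ← Matrix.mulVec_mulVec]
    rw [hBx, hy]
    have hres : ∀ p, (Q *ᵥ (A *ᵥ x')) p - (Q *ᵥ y') p = (Q *ᵥ (A *ᵥ x' - y')) p := by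
      intro p
      rw [Matrix.mulVec_sub]
      simp
    calc ∑ p, ((Q *ᵥ (A *ᵥ x')) p - (Q *ᵥ y') p) ^ 2
        = ∑ p, ((Q *ᵥ (A *ᵥ x' - y')) p) ^ 2 := by
          exact Finset.sum_congr rfl fun p _ => by rw [hres]
      _ = (Q *ᵥ (A *ᵥ x' - y')) ⬝ᵥ (Q *ᵥ (A *ᵥ x' - y')) := by
          simp [dotProduct, sq]
      _ = (A *ᵥ x' - y') ⬝ᵥ (A *ᵥ x' - y') := by
          rw [Matrix.dotProduct_mulVec, ← Matrix.mulVec_transpose,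
            Matrix.mulVec_mulVec, hQ, Matrix.one_mulVec]
      _ = ∑ p, ((A *ᵥ x') p - y' p) ^ 2 := by
          simp [dotProduct, sq]
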